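/- Let v : ℝ → ℝ be six times continuously differentiable and x₀ ∈ ℝ. For h > 0 define the cell averages v̄_j(h) = (1/h)∫_{x₀+(j−1/2)h}^{x₀+(j+1/2)h} v(t) dt for j = −1, 0, 1, and the smoothness indicator β₁(h) = (13/12)(v̄₋₁ − 2v̄₀ + v̄₁)² + (1/4)(v̄₋₁ − v̄₁)². Then β₁(h) − [v′(x₀)²h² + ((13/12)v″(x₀)² + (5/12)v′(x₀)v‴(x₀))h⁴] is O(h⁶) as h → 0⁺. -/

import Mathlib

open Filter Topology Asymptotics

section helpers
open Set

lemma myIDW {f : ℝ → ℝ} {n : WithTop ℕ∞} (hf : ContDiff ℝ n f)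
    {s : Set ℝ} (hs : UniqueDiffOn ℝ s) {k : ℕ} (hk : (k : WithTop ℕ∞) ≤ n) {x : ℝ}
    (hx : x ∈ s) : iteratedDerivWithin k f s x = iteratedDeriv k f x := by
  have hfk : ContDiff ℝ (k : ℕ∞) f := hf.of_le (by exact_mod_cast hk)
  have h := (contDiff_iff_ftaylorSeries.mp hfk).hasFTaylorSeriesUpToOn s
  rw [iteratedDerivWithin, iteratedDeriv,
    ← h.eq_iteratedFDerivWithin_of_uniqueDiffOn le_rfl hs hx]
  rfl

lemma myTaylor (f : ℝ → ℝ) (n : ℕ) (hf : ContDiff ℝ ((n : WithTop ℕ∞) + 1) f) :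
    (fun h : ℝ => f h - ∑ k ∈ Finset.range (n + 1),
        ((Nat.factorial k : ℝ))⁻¹ * h ^ k * iteratedDeriv k f 0)
      =O[𝓝[>] (0 : ℝ)] fun h => h ^ (n + 1) := by
  have hIcc : UniqueDiffOn ℝ (Icc (0:ℝ) 1) := uniqueDiffOn_Icc one_pos
  obtain ⟨C, hC⟩ := exists_taylor_mean_remainder_bound (f := f) (a := 0) (b := 1)
    zero_le_one hf.contDiffOn
  rw [isBigO_iff]
  refine ⟨|C|, ?_⟩
  filter_upwards [Ioc_mem_nhdsGT_of_mem (Set.mem_Ico.mpr ⟨le_rfl, one_pos⟩)] with h hh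
  have h01 : h ∈ Icc (0:ℝ) 1 := ⟨hh.1.le, hh.2⟩
  have := hC h h01
  rw [taylor_within_apply] at this
  have hsum : ∀ k ∈ Finset.range (n + 1),
      (((Nat.factorial k : ℝ))⁻¹ * (h - 0) ^ k) • iteratedDerivWithin k f (Icc (0:ℝ) 1) 0
        = ((Nat.factorial k : ℝ))⁻¹ * h ^ k * iteratedDeriv k f 0 := by
    intro k hk
    rw [myIDW hf hIcc ?_ (Set.left_mem_Icc.mpr zero_le_one), smul_eq_mul, sub_zero]
    have : (k : ℕ) ≤ n + 1 := Nat.le_of_lt_succ (Nat.lt_succ_of_lt (Finset.mem_range.mp hk))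
    calc (k : WithTop ℕ∞) ≤ ((n+1 : ℕ) : WithTop ℕ∞) := by exact_mod_cast Nat.le_succ_of_le (Nat.lt_succ_iff.mp (Finset.mem_range.mp hk))
      _ = (n : WithTop ℕ∞) + 1 := by push_cast; ring
  rw [Finset.sum_congr rfl hsum] at this
  calc ‖f h - ∑ k ∈ Finset.range (n + 1), ((Nat.factorial k : ℝ))⁻¹ * h ^ k * iteratedDeriv k f 0‖
      ≤ C * (h - 0) ^ (n + 1) := this
    _ ≤ C * |h ^ (n+1)| := by rw [sub_zero, abs_of_nonneg (pow_nonneg hh.1.le _)]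
    _ ≤ |C| * |h ^ (n+1)| := by gcongr; exact le_abs_self C
    _ = |C| * ‖h ^ (n+1)‖ := by rw [Real.norm_eq_abs]

lemma myIDadd {f g : ℝ → ℝ} {k : ℕ} (hf : ContDiff ℝ (k : ℕ∞) f)
    (hg : ContDiff ℝ (k : ℕ∞) g) (x : ℝ) :
    iteratedDeriv k (fun y => f y + g y) x = iteratedDeriv k f x + iteratedDeriv k g x := by
  simp only [← iteratedDerivWithin_univ]
  exact iteratedDerivWithin_add (Set.mem_univ x) uniqueDiffOn_univ
    hf.contDiffWithinAt hg.contDiffWithinAt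

lemma myIDsmul {f : ℝ → ℝ} {k : ℕ} (c : ℝ) (hf : ContDiff ℝ (k : ℕ∞) f) (x : ℝ) :
    iteratedDeriv k (fun y => c * f y) x = c * iteratedDeriv k f x := by
  simp only [← iteratedDerivWithin_univ]
  exact iteratedDerivWithin_const_mul (Set.mem_univ x) uniqueDiffOn_univ c hf.contDiffWithinAt

lemma myIDcomb {F : ℝ → ℝ} {k : ℕ} (hF : ContDiff ℝ (k : ℕ∞) F)
    (a₁ a₂ a₃ a₄ c₁ c₂ c₃ c₄ : ℝ) :
    iteratedDeriv k
      (fun h => a₁ * F (c₁ * h) + a₂ * F (c₂ * h) + a₃ * F (c₃ * h) + a₄ * F (c₄ * h)) 0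
      = (a₁ * c₁ ^ k + a₂ * c₂ ^ k + a₃ * c₃ ^ k + a₄ * c₄ ^ k) * iteratedDeriv k F 0 := by
  have hc : ∀ c : ℝ, ContDiff ℝ (k : ℕ∞) (fun h : ℝ => F (c * h)) :=
    fun c => hF.comp (contDiff_const.mul contDiff_id)
  have hc' : ∀ a c : ℝ, ContDiff ℝ (k : ℕ∞) (fun h : ℝ => a * F (c * h)) :=
    fun a c => contDiff_const.mul (hc c)
  have hmul : ∀ a c : ℝ, iteratedDeriv k (fun h : ℝ => a * F (c * h)) 0
      = a * c ^ k * iteratedDeriv k F 0 := by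
    intro a c
    rw [myIDsmul a (hc c) 0, iteratedDeriv_comp_const_mul hF c]
    simp [mul_assoc]
  rw [myIDadd (((hc' a₁ c₁).add (hc' a₂ c₂)).add (hc' a₃ c₃)) (hc' a₄ c₄),
      myIDadd ((hc' a₁ c₁).add (hc' a₂ c₂)) (hc' a₃ c₃),
      myIDadd (hc' a₁ c₁) (hc' a₂ c₂), hmul, hmul, hmul, hmul]
  ring

lemma myPow {m k : ℕ} (hk : k ≤ m) :
    (fun h : ℝ => h ^ m) =O[𝓝[>] (0:ℝ)] fun h => h ^ k := by
  rw [isBigO_iff]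
  refine ⟨1, ?_⟩
  filter_upwards [Ioc_mem_nhdsGT_of_mem (Set.mem_Ico.mpr ⟨le_rfl, one_pos⟩)] with h hh
  rw [one_mul, Real.norm_eq_abs, Real.norm_eq_abs, abs_of_nonneg (pow_nonneg hh.1.le _),
    abs_of_nonneg (pow_nonneg hh.1.le _)]
  exact pow_le_pow_of_le_one hh.1.le hh.2 hk

end helpers

/-- Cell average of `v` over the cell `[x₀+(j-1/2)h, x₀+(j+1/2)h]`. -/
noncomputable def cellAvg (v : ℝ → ℝ) (x₀ h j : ℝ) : ℝ :=
  (1 / h) * ∫ t in (x₀ + (j - 1 / 2) * h)..(x₀ + (j + 1 / 2) * h), v t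

/-- The Jiang–Shu smoothness indicator `β₀`. -/
noncomputable def beta0 (v : ℝ → ℝ) (x₀ h : ℝ) : ℝ :=
  (13 / 12) * (cellAvg v x₀ h (-2) - 2 * cellAvg v x₀ h (-1) + cellAvg v x₀ h 0) ^ 2
    + (1 / 4) * (cellAvg v x₀ h (-2) - 4 * cellAvg v x₀ h (-1) + 3 * cellAvg v x₀ h 0) ^ 2

/-- The Jiang–Shu smoothness indicator `β₁`. -/
noncomputable def beta1 (v : ℝ → ℝ) (x₀ h : ℝ) : ℝ :=
  (13 / 12) * (cellAvg v x₀ h (-1) - 2 * cellAvg v x₀ h 0 + cellAvg v x₀ h 1) ^ 2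
    + (1 / 4) * (cellAvg v x₀ h (-1) - cellAvg v x₀ h 1) ^ 2

/-- The Jiang–Shu smoothness indicator `β₂`. -/
noncomputable def beta2 (v : ℝ → ℝ) (x₀ h : ℝ) : ℝ :=
  (13 / 12) * (cellAvg v x₀ h 0 - 2 * cellAvg v x₀ h 1 + cellAvg v x₀ h 2) ^ 2
    + (1 / 4) * (3 * cellAvg v x₀ h 0 - 4 * cellAvg v x₀ h 1 + cellAvg v x₀ h 2) ^ 2

/-- Taylor expansion of the smoothness indicator `β₁`:
`β₁(h) = v′(x₀)²h² + ((13/12)v″(x₀)² + (5/12)v′(x₀)v‴(x₀))h⁴ + O(h⁶)` as `h → 0⁺`. -/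
theorem stmt13 (v : ℝ → ℝ) (hv : ContDiff ℝ 6 v) (x₀ : ℝ) :
    (fun h : ℝ => beta1 v x₀ h -
        ((deriv v x₀) ^ 2 * h ^ 2
          + ((13 / 12) * (iteratedDeriv 2 v x₀) ^ 2
            + (5 / 12) * deriv v x₀ * iteratedDeriv 3 v x₀) * h ^ 4))
      =O[𝓝[>] (0 : ℝ)] (fun h => h ^ 6) := by
  have hvc : Continuous v := hv.continuous
  set F : ℝ → ℝ := fun y => ∫ t in x₀..(x₀ + y), v t with hFdef
  -- derivative of F
  have hFderiv : deriv F = fun y => v (x₀ + y) := by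
    funext y
    rw [hFdef, deriv_comp_const_add (f := fun z => ∫ t in x₀..z, v t),
      Continuous.deriv_integral v hvc]
  have hFdiff : Differentiable ℝ F := by
    have hgd : Differentiable ℝ (fun z => ∫ t in x₀..z, v t) := fun z =>
      ((hvc.integral_hasStrictDerivAt x₀ z).hasDerivAt).differentiableAt
    exact hgd.comp (differentiable_id.const_add x₀)
  have hF7 : ContDiff ℝ ((6 : WithTop ℕ∞) + 1) F := by
    rw [contDiff_succ_iff_deriv]
    refine ⟨hFdiff, ?_, ?_⟩
    · intro h; simp at h
    · rw [hFderiv]; exact hv.comp (contDiff_const.add contDiff_id)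
  have hF' : ∀ k : ℕ, k ≤ 7 → ContDiff ℝ ((k : ℕ∞) : WithTop ℕ∞) F := by
    intro k hk
    refine hF7.of_le ?_
    have : ((6 : WithTop ℕ∞) + 1) = ((7 : ℕ∞) : WithTop ℕ∞) := by norm_cast
    rw [this]
    exact_mod_cast hk
  have hF0 : F 0 = 0 := by simp [hFdef]
  have hdF : ∀ k : ℕ, iteratedDeriv (k + 1) F 0 = iteratedDeriv k v x₀ := by
    intro k
    rw [iteratedDeriv_succ', hFderiv, iteratedDeriv_comp_const_add]
    simp
  have hdF1 : iteratedDeriv 1 F 0 = v x₀ := by simpa using hdF 0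
  have hdF2 : iteratedDeriv 2 F 0 = deriv v x₀ := by
    simpa [iteratedDeriv_one] using hdF 1
  have hdF3 : iteratedDeriv 3 F 0 = iteratedDeriv 2 v x₀ := hdF 2
  have hdF4 : iteratedDeriv 4 F 0 = iteratedDeriv 3 v x₀ := hdF 3
  have hdF5 : iteratedDeriv 5 F 0 = iteratedDeriv 4 v x₀ := hdF 4
  -- the two key combinations
  set A : ℝ → ℝ := fun h =>
    1 * F ((3/2) * h) + (-3) * F ((1/2) * h) + 3 * F ((-(1/2)) * h) + (-1) * F ((-(3/2)) * h)
    with hAdef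
  set G : ℝ → ℝ := fun h =>
    1 * F ((1/2) * h) + 1 * F ((-(1/2)) * h) + (-1) * F ((3/2) * h) + (-1) * F ((-(3/2)) * h)
    with hGdef
  have hcomp : ∀ (m : ℕ∞) (a c : ℝ), ContDiff ℝ (m : WithTop ℕ∞) F →
      ContDiff ℝ (m : WithTop ℕ∞) (fun h : ℝ => a * F (c * h)) := by
    intro m a c hF
    exact contDiff_const.mul (hF.comp (contDiff_const.mul contDiff_id))
  have hidA : ∀ k : ℕ, k ≤ 7 → iteratedDeriv k A 0 =
      (1 * (3/2:ℝ) ^ k + (-3) * (1/2:ℝ) ^ k + 3 * (-(1/2):ℝ) ^ k + (-1) * (-(3/2):ℝ) ^ k)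
        * iteratedDeriv k F 0 := by
    intro k hk
    rw [hAdef]
    exact myIDcomb (hF' k hk) 1 (-3) 3 (-1) (3/2) (1/2) (-(1/2)) (-(3/2))
  have hidG : ∀ k : ℕ, k ≤ 7 → iteratedDeriv k G 0 =
      (1 * (1/2:ℝ) ^ k + 1 * (-(1/2):ℝ) ^ k + (-1) * (3/2:ℝ) ^ k + (-1) * (-(3/2):ℝ) ^ k)
        * iteratedDeriv k F 0 := by
    intro k hk
    rw [hGdef]
    exact myIDcomb (hF' k hk) 1 1 (-1) (-1) (1/2) (-(1/2)) (3/2) (-(3/2))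
  have hA5 : ContDiff ℝ (((4:ℕ) : WithTop ℕ∞) + 1) A := by
    have h5 : (((4:ℕ) : WithTop ℕ∞) + 1) = ((5 : ℕ∞) : WithTop ℕ∞) := by norm_cast
    rw [hAdef, h5]
    have hF5 : ContDiff ℝ ((5 : ℕ∞) : WithTop ℕ∞) F := by exact_mod_cast hF' 5 (by norm_num)
    exact (((hcomp _ _ _ hF5).add (hcomp _ _ _ hF5)).add (hcomp _ _ _ hF5)).add
      (hcomp _ _ _ hF5)
  have hG6 : ContDiff ℝ (((5:ℕ) : WithTop ℕ∞) + 1) G := by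
    have h6 : (((5:ℕ) : WithTop ℕ∞) + 1) = ((6 : ℕ∞) : WithTop ℕ∞) := by norm_cast
    rw [hGdef, h6]
    have hF6 : ContDiff ℝ ((6 : ℕ∞) : WithTop ℕ∞) F := by exact_mod_cast hF' 6 (by norm_num)
    exact (((hcomp _ _ _ hF6).add (hcomp _ _ _ hF6)).add (hcomp _ _ _ hF6)).add
      (hcomp _ _ _ hF6)
  -- Taylor expansions of A and G
  have hATay : (fun h : ℝ => A h - iteratedDeriv 2 v x₀ * h ^ 3)
      =O[𝓝[>] (0:ℝ)] fun h => h ^ 5 := by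
    have hT := myTaylor A 4 hA5
    refine hT.congr (fun h => ?_) (fun h => rfl)
    congr 1
    rw [Finset.sum_range_succ, Finset.sum_range_succ, Finset.sum_range_succ,
      Finset.sum_range_succ, Finset.sum_range_one,
      hidA 0 (by norm_num), hidA 1 (by norm_num), hidA 2 (by norm_num),
      hidA 3 (by norm_num), hidA 4 (by norm_num),
      iteratedDeriv_zero, hF0, hdF1, hdF2, hdF3, hdF4]
    norm_num [Nat.factorial]
    ring
  have hGTay : (fun h : ℝ => G h - (-2 * deriv v x₀ * h ^ 2
        - (5/12) * iteratedDeriv 3 v x₀ * h ^ 4))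
      =O[𝓝[>] (0:ℝ)] fun h => h ^ 6 := by
    have hT := myTaylor G 5 hG6
    refine hT.congr (fun h => ?_) (fun h => rfl)
    congr 1
    rw [Finset.sum_range_succ, Finset.sum_range_succ, Finset.sum_range_succ,
      Finset.sum_range_succ, Finset.sum_range_succ, Finset.sum_range_one,
      hidG 0 (by norm_num), hidG 1 (by norm_num), hidG 2 (by norm_num),
      hidG 3 (by norm_num), hidG 4 (by norm_num), hidG 5 (by norm_num),
      iteratedDeriv_zero, hF0, hdF1, hdF2, hdF3, hdF4, hdF5]
    norm_num [Nat.factorial]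
    ring
  -- identification of cell averages with F
  have hcell : ∀ h : ℝ, h ≠ 0 → ∀ j : ℝ,
      cellAvg v x₀ h j = (F ((j + 1/2) * h) - F ((j - 1/2) * h)) * h⁻¹ := by
    intro h hh j
    rw [cellAvg, hFdef]
    have : (∫ t in (x₀ + (j - 1/2) * h)..(x₀ + (j + 1/2) * h), v t)
        = (∫ t in x₀..(x₀ + (j + 1/2) * h), v t) - ∫ t in x₀..(x₀ + (j - 1/2) * h), v t := by
      rw [intervalIntegral.integral_interval_sub_left
        (hvc.intervalIntegrable _ _) (hvc.intervalIntegrable _ _)]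
    rw [this]
    ring
  have hmem : ∀ᶠ h : ℝ in 𝓝[>] (0:ℝ), (0:ℝ) < h := self_mem_nhdsWithin
  -- a and b
  set a : ℝ → ℝ := fun h => cellAvg v x₀ h (-1) - 2 * cellAvg v x₀ h 0 + cellAvg v x₀ h 1
    with hadef
  set b : ℝ → ℝ := fun h => cellAvg v x₀ h (-1) - cellAvg v x₀ h 1 with hbdef
  have haA : ∀ᶠ h : ℝ in 𝓝[>] (0:ℝ), a h = A h * h⁻¹ := by
    filter_upwards [hmem] with h hh
    rw [hadef]
    simp only [hcell h hh.ne']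
    rw [hAdef]
    norm_num
    ring
  have hbG : ∀ᶠ h : ℝ in 𝓝[>] (0:ℝ), b h = G h * h⁻¹ := by
    filter_upwards [hmem] with h hh
    rw [hbdef]
    simp only [hcell h hh.ne']
    rw [hGdef]
    norm_num
    ring
  -- O-estimates for a
  have ha4 : (fun h : ℝ => a h - iteratedDeriv 2 v x₀ * h ^ 2)
      =O[𝓝[>] (0:ℝ)] fun h => h ^ 4 := by
    have := hATay.mul (isBigO_refl (fun h : ℝ => h⁻¹) (𝓝[>] (0:ℝ)))
    refine this.congr' ?_ ?_
    · filter_upwards [hmem, haA] with h hh hha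
      rw [hha]
      field_simp
    · filter_upwards [hmem] with h hh
      field_simp
  have ha2 : (fun h : ℝ => a h + iteratedDeriv 2 v x₀ * h ^ 2)
      =O[𝓝[>] (0:ℝ)] fun h => h ^ 2 := by
    have t1 := ha4.trans (myPow (by norm_num : 2 ≤ 4))
    have t2 := (isBigO_refl (fun h : ℝ => h ^ 2) (𝓝[>] (0:ℝ))).const_mul_left
      (2 * iteratedDeriv 2 v x₀)
    exact (t1.add t2).congr (fun h => by ring) (fun h => by ring)
  have hprodA : (fun h : ℝ => a h ^ 2 - (iteratedDeriv 2 v x₀) ^ 2 * h ^ 4)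
      =O[𝓝[>] (0:ℝ)] fun h => h ^ 6 := by
    exact (ha4.mul ha2).congr (fun h => by ring) (fun h => by ring)
  -- O-estimates for b
  have hb5 : (fun h : ℝ => b h - (-2 * deriv v x₀ * h
        - (5/12) * iteratedDeriv 3 v x₀ * h ^ 3))
      =O[𝓝[>] (0:ℝ)] fun h => h ^ 5 := by
    have := hGTay.mul (isBigO_refl (fun h : ℝ => h⁻¹) (𝓝[>] (0:ℝ)))
    refine this.congr' ?_ ?_
    · filter_upwards [hmem, hbG] with h hh hhb
      rw [hhb]
      field_simp
    · filter_upwards [hmem] with h hh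
      field_simp
  have hb1 : (fun h : ℝ => b h + (-2 * deriv v x₀ * h
        - (5/12) * iteratedDeriv 3 v x₀ * h ^ 3))
      =O[𝓝[>] (0:ℝ)] fun h => h ^ 1 := by
    have t1 := hb5.trans (myPow (by norm_num : 1 ≤ 5))
    have t2 := (isBigO_refl (fun h : ℝ => h ^ 1) (𝓝[>] (0:ℝ))).const_mul_left
      (-4 * deriv v x₀)
    have t3 := ((myPow (by norm_num : 1 ≤ 3)).const_mul_left
      (-(5/6) * iteratedDeriv 3 v x₀))
    exact ((t1.add t2).add t3).congr (fun h => by ring) (fun h => by ring)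
  have hprodB : (fun h : ℝ => b h ^ 2 - (-2 * deriv v x₀ * h
        - (5/12) * iteratedDeriv 3 v x₀ * h ^ 3) ^ 2)
      =O[𝓝[>] (0:ℝ)] fun h => h ^ 6 := by
    exact (hb5.mul hb1).congr (fun h => by ring) (fun h => by ring)
  -- assemble
  have hfin := ((hprodA.const_mul_left (13/12)).add (hprodB.const_mul_left (1/4))).add
    (((isBigO_refl (fun h : ℝ => h ^ 6) (𝓝[>] (0:ℝ))).const_mul_left
      ((25/576) * (iteratedDeriv 3 v x₀) ^ 2)))
  refine hfin.congr (fun h => ?_) (fun h => by ring)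
  have e1 : cellAvg v x₀ h (-1) - 2 * cellAvg v x₀ h 0 + cellAvg v x₀ h 1 = a h := rfl
  have e2 : cellAvg v x₀ h (-1) - cellAvg v x₀ h 1 = b h := rfl
  rw [beta1, e1, e2]
  ring
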